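/- Let x₁, x₂ be real numbers with 0 < x₁ < x₂ < 2x₁, let s₁, q, r be nonzero reals, set X = s₁F₁₇ and Y = q(F₁₆ − F₃₄) + r(F₂₆ − F₃₅), and let Z ∈ u(3) be the matrix with parameters a,b,c,d,e,f,g,h,k. If [Z,Y] = 0 and (x₂−x₁)·[X,Y] = x₁·[X,Z], then a = b = c = d = e = g = k = 0, f = ((x₂−x₁)/x₁)·q and h = ((x₂−x₁)/x₁)·r; consequently W = X + Y + Z equals s₁F₁₇ + (x₂/x₁)q·F₁₆ + (x₂/x₁)r·F₂₆ + ((x₂−2x₁)/x₁)q·F₃₄ + ((x₂−2x₁)/x₁)r·F₃₅. -/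

import Mathlib

set_option maxHeartbeats 4000000

open Matrix

/-- `F i j = E_{ij} - E_{ji}` (here `i j : Fin 7` are zero-based indices, while the
paper uses one-based indices: `F₁₇ = F 0 6`, etc.). -/
def F (i j : Fin 7) : Matrix (Fin 7) (Fin 7) ℝ :=
  Matrix.single i j 1 - Matrix.single j i 1

/-- The general element of `u(3) ⊂ so(7)` with parameters `a, b, c, d, e, f, g, h, k`. -/
def Zmat (a b c d e f g h k : ℝ) : Matrix (Fin 7) (Fin 7) ℝ :=
  !![0, a, b, d, e, f, 0;
     -a, 0, c, e, g, h, 0;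
     -b, -c, 0, f, h, k, 0;
     -d, -e, -f, 0, a, b, 0;
     -e, -g, -h, -a, 0, c, 0;
     -f, -h, -k, -b, -c, 0, 0;
     0, 0, 0, 0, 0, 0, 0]

lemma cons_val_five' {α : Type*} {m : ℕ} (x : α) (u : Fin m.succ.succ.succ.succ.succ → α) :
    Matrix.vecCons x u 5 =
      Matrix.vecHead (Matrix.vecTail (Matrix.vecTail (Matrix.vecTail (Matrix.vecTail u)))) :=
  rfl

lemma cons_val_six' {α : Type*} {m : ℕ} (x : α) (u : Fin m.succ.succ.succ.succ.succ.succ → α) :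
    Matrix.vecCons x u 6 =
      Matrix.vecHead (Matrix.vecTail (Matrix.vecTail (Matrix.vecTail (Matrix.vecTail
        (Matrix.vecTail u))))) :=
  rfl

/-- Lemma `vspom1` of the paper: the form of a geodesic vector
`W = X + Y + Z` on `(SO(7)/U(3), μ_{x₁,x₂})` with `x₁ < x₂ < 2x₁`. -/
theorem stmt_3 (x₁ x₂ s₁ q r a b c d e f g h k : ℝ)
    (hx₁ : 0 < x₁) (hx₁₂ : x₁ < x₂) (hx₂ : x₂ < 2 * x₁)
    (hs₁ : s₁ ≠ 0) (hq : q ≠ 0) (hr : r ≠ 0)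
    (X Y Z : Matrix (Fin 7) (Fin 7) ℝ)
    (hX : X = s₁ • F 0 6)
    (hY : Y = q • (F 0 5 - F 2 3) + r • (F 1 5 - F 2 4))
    (hZ : Z = Zmat a b c d e f g h k)
    (h1 : Z * Y - Y * Z = 0)
    (h2 : (x₂ - x₁) • (X * Y - Y * X) = x₁ • (X * Z - Z * X)) :
    a = 0 ∧ b = 0 ∧ c = 0 ∧ d = 0 ∧ e = 0 ∧ g = 0 ∧ k = 0 ∧
    f = (x₂ - x₁) / x₁ * q ∧ h = (x₂ - x₁) / x₁ * r ∧
    X + Y + Z =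
      s₁ • F 0 6 + (x₂ / x₁ * q) • F 0 5 + (x₂ / x₁ * r) • F 1 5 +
        ((x₂ - 2 * x₁) / x₁ * q) • F 2 3 + ((x₂ - 2 * x₁) / x₁ * r) • F 2 4 := by
  subst hX hY hZ
  have hx₁' : x₁ ≠ 0 := ne_of_gt hx₁
  have e16 := congrFun (congrFun h2 1) 6
  have e26 := congrFun (congrFun h2 2) 6
  have e36 := congrFun (congrFun h2 3) 6
  have e46 := congrFun (congrFun h2 4) 6
  have e56 := congrFun (congrFun h2 5) 6
  have f01 := congrFun (congrFun h1 0) 1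
  have f02 := congrFun (congrFun h1 0) 2
  have f04 := congrFun (congrFun h1 0) 4
  have f12 := congrFun (congrFun h1 1) 2
  simp (config := { decide := true }) [F, Zmat, Matrix.cons_val_succ, cons_val_five',
    cons_val_six', Matrix.mul_apply, Fin.sum_univ_seven, Matrix.single,
    Matrix.vecHead, Matrix.vecTail, Pi.smul_apply, Pi.sub_apply, Function.comp,
    Matrix.smul_apply, Matrix.sub_apply, Matrix.add_apply, Fin.isValue]
      at e16 e26 e36 e46 e56 f01 f02 f04 f12
  have ha : a = 0 := by rcases e16 with h' | h' | h'
                        exacts [absurd h' hx₁', h', absurd h' hs₁]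
  have hb : b = 0 := by rcases e26 with h' | h' | h'
                        exacts [absurd h' hx₁', h', absurd h' hs₁]
  have hd : d = 0 := by rcases e36 with h' | h' | h'
                        exacts [absurd h' hx₁', h', absurd h' hs₁]
  have he : e = 0 := by rcases e46 with h' | h' | h'
                        exacts [absurd h' hx₁', h', absurd h' hs₁]
  have hf' : x₁ * f = (x₂ - x₁) * q := by
    have hc : ((x₂ - x₁) * q - x₁ * f) * s₁ = 0 := by linear_combination e56
    rcases mul_eq_zero.mp hc with h' | h'
    · linarith
    · exact absurd h' hs₁
  have hf : f = (x₂ - x₁) / x₁ * q := by field_simp; linarith [hf']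
  have hk : k = 0 := by
    have : q * k = 0 := by rw [hd, he] at f02; linarith
    rcases mul_eq_zero.mp this with h' | h'
    exacts [absurd h' hq, h']
  have hc : c = 0 := by
    have : q * c = 0 := by rw [hb] at f04; linarith
    rcases mul_eq_zero.mp this with h' | h'
    exacts [absurd h' hq, h']
  have hg : g = 0 := by
    have : g * r = 0 := by rw [he, hk] at f12; linarith
    rcases mul_eq_zero.mp this with h' | h'
    exacts [h', absurd h' hr]
  have hh : h = (x₂ - x₁) / x₁ * r := by
    have hc2 : (h * x₁ - (x₂ - x₁) * r) * q = 0 := by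
      linear_combination x₁ * f01 + r * hf'
    rcases mul_eq_zero.mp hc2 with h' | h'
    · field_simp; linarith
    · exact absurd h' hq
  refine ⟨ha, hb, hc, hd, he, hg, hk, hf, hh, ?_⟩
  subst ha hb hc hd he hg hk hf hh
  have hZsplit : ∀ f' h' : ℝ, Zmat 0 0 0 0 0 f' 0 h' 0 =
      f' • (F 0 5 + F 2 3) + h' • (F 1 5 + F 2 4) := by
    intro f' h'
    ext i j
    fin_cases i <;> fin_cases j <;>
      simp (config := { decide := true }) [F, Zmat, Matrix.single,
        Matrix.cons_val_succ, cons_val_five', cons_val_six', Matrix.vecHead, Matrix.vecTail,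
        Matrix.smul_apply, Matrix.sub_apply, Matrix.add_apply]
  rw [hZsplit]
  match_scalars <;> field_simp <;> ring
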